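/- Let Γ = Σ_k (v^k ∂/∂q^k + F^k ∂/∂v^k) be a SODE on ℝ^{2n} and f ∈ C^∞(ℝ^{2n}) nowhere vanishing. Define new coordinates Q^k = q^k, 𝒱^k = f v^k. Then Γ' = fΓ satisfies L_{Γ'} Q^k = 𝒱^k, i.e., Γ' is a SODE in the coordinates (Q, 𝒱), and in these coordinates Γ' = 𝒱^k ∂/∂Q^k + F̃^k ∂/∂𝒱^k with F̃^k = L_{Γ'}(f v^k) = f v^k v^j ∂f/∂q^j + f v^k F^j ∂f/∂v^j + f² F^k. -/

import Mathlib

/-- Phase space `ℝ²ⁿ ≅ ℝⁿ × ℝⁿ` with coordinates `(q, v)`. -/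
abbrev TRn (n : ℕ) := (Fin n → ℝ) × (Fin n → ℝ)

/-- Let `Γ = vᵏ ∂/∂qᵏ + Fᵏ ∂/∂vᵏ` be a SODE and `f` nowhere vanishing. In the new
coordinates `Qᵏ = qᵏ`, `𝒱ᵏ = f vᵏ`, the field `Γ' = fΓ` satisfies `L_{Γ'} Qᵏ = 𝒱ᵏ`
(so `Γ'` is a SODE there), with forces `F̃ = L_{Γ'}(f v) = Γ'(f) v + f² F`. -/
theorem stmt_11 {n : ℕ} (F : TRn n → (Fin n → ℝ)) (f : TRn n → ℝ)
    (hf0 : ∀ x, f x ≠ 0) (hf : Differentiable ℝ f) (hF : Differentiable ℝ F) :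
    (∀ x : TRn n, fderiv ℝ (fun y : TRn n => y.1) x (f x • ((x.2, F x) : TRn n))
        = f x • x.2) ∧
    (∀ x : TRn n, fderiv ℝ (fun y : TRn n => f y • y.2) x (f x • ((x.2, F x) : TRn n))
        = fderiv ℝ f x (f x • ((x.2, F x) : TRn n)) • x.2 + (f x) ^ 2 • F x) := by
  constructor
  · intro x
    rw [fderiv_fst]
    simp [Prod.smul_def]
  · intro x
    have h : fderiv ℝ (fun y : TRn n => f y • y.2) x
        = (f x) • (fderiv ℝ (fun y : TRn n => y.2) x)
          + (fderiv ℝ f x).smulRight x.2 := by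
      have := fderiv_fun_smul (𝕜 := ℝ) (c := f) (f := fun y : TRn n => y.2) (x := x)
        (hf x) (differentiable_snd.differentiableAt)
      simpa using this
    rw [h]
    simp only [ContinuousLinearMap.add_apply, ContinuousLinearMap.smul_apply,
      ContinuousLinearMap.smulRight_apply, fderiv_snd, ContinuousLinearMap.coe_snd',
      Prod.smul_snd]
    rw [add_comm]
    congr 1
    rw [smul_smul, sq]
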